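/- Let V : ℓ²(Δ_Γ) → ℓ²(Δ_Γ × Γ) be the linear isometry determined by Vδ_y = δ_y ⊗ ξ_y, i.e., (Vδ_y)(z,t) = ξ_y(t) if z = y and 0 otherwise (with ξ_e defined to be the basis vector δ_{e_Γ}). For s ∈ Γ let W(s) be the unitary of ℓ²(Δ_Γ × Γ) permuting the basis by δ_{(y,t)} ↦ δ_{(s·y, st)}, and let σ(s) be the unitary of ℓ²(Δ_Γ) given by σ(s)δ_y = δ_{s·y}, where s·y is the Bernoulli shift. Then for every s ∈ Γ the operator V* W(s) V − σ(s) on ℓ²(Δ_Γ) is compact. -/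

import Mathlib

open Function

/-- The group `Δ_Γ = ⊕_Γ Δ` of finitely supported functions `Γ → Δ`
under pointwise multiplication, as a subgroup of `Γ → Δ`. -/
def DeltaGamma (Γ Δ : Type*) [Group Δ] : Subgroup (Γ → Δ) where
  carrier := {y | (mulSupport y).Finite}
  one_mem' := by simp [mulSupport_one]
  mul_mem' := by
    intro a b ha hb
    exact ((Set.Finite.union ha hb).subset (mulSupport_mul a b))
  inv_mem' := by
    intro a ha
    simpa [mulSupport_inv] using ha

/-- The Bernoulli shift of `Γ` on `Δ_Γ`: `(s·y)(t) = y(s⁻¹t)`. -/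
def bshift {Γ Δ : Type*} [Group Γ] [Group Δ] (s : Γ) (y : DeltaGamma Γ Δ) :
    DeltaGamma Γ Δ :=
  ⟨fun t => (y : Γ → Δ) (s⁻¹ * t), by
    have hy : (mulSupport (y : Γ → Δ)).Finite := y.2
    refine Set.Finite.subset (hy.image (fun t => s * t)) ?_
    intro t ht
    exact ⟨s⁻¹ * t, ht, by group⟩⟩

/-- A proper length function on a group. -/
structure IsProperLength {G : Type*} [Group G] (l : G → ℝ) : Prop where
  nonneg : ∀ s, 0 ≤ l s
  eq_zero_iff : ∀ s, l s = 0 ↔ s = 1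
  mul_le : ∀ s t, l (s * t) ≤ l s + l t
  inv_eq : ∀ s, l s⁻¹ = l s
  proper : ∀ R : ℝ, {s : G | l s ≤ R}.Finite

open Classical in
/-- `w(y,t) = l_Γ(t) + l_Δ(y t)` if `t ∈ supp y`, and `0` otherwise. -/
noncomputable def wt {Γ Δ : Type*} [Group Δ] (lG : Γ → ℝ) (lD : Δ → ℝ)
    (y : Γ → Δ) (t : Γ) : ℝ :=
  if y t ≠ 1 then lG t + lD (y t) else 0

/-- `w(y) = Σ_t w(y,t)`. -/
noncomputable def w {Γ Δ : Type*} [Group Δ] (lG : Γ → ℝ) (lD : Δ → ℝ)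
    (y : Γ → Δ) : ℝ :=
  ∑ᶠ t, wt lG lD y t

open Classical in
/-- The coefficients of the unit vector `ξ_y ∈ ℓ²(Γ)`, viewed as complex numbers:
`ξ_y(t) = (w(y,t)/w(y))^{1/2}` for `y ≠ e`, and `ξ_e = δ_{e_Γ}`. -/
noncomputable def xiC {Γ Δ : Type*} [Group Γ] [Group Δ] (lG : Γ → ℝ) (lD : Δ → ℝ)
    (y : DeltaGamma Γ Δ) (t : Γ) : ℂ :=
  if y = 1 then (if t = 1 then 1 else 0)
  else (Real.sqrt (wt lG lD (y : Γ → Δ) t / w lG lD (y : Γ → Δ)) : ℂ)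

set_option linter.unusedSectionVars false

section
variable {Γ : Type*} {ι : Type*}

/-- Key elementary estimate: two probability vectors have sqrt-correlation close to 1. -/
lemma abs_sum_sqrt_sub_one_le (F : Finset ι) (α β : ι → ℝ)
    (hα0 : ∀ i ∈ F, 0 ≤ α i) (hβ0 : ∀ i ∈ F, 0 ≤ β i)
    (hα1 : ∑ i ∈ F, α i = 1) (hβ1 : ∑ i ∈ F, β i = 1) :
    |(∑ i ∈ F, Real.sqrt (α i) * Real.sqrt (β i)) - 1| ≤ ∑ i ∈ F, |α i - β i| := by
  rw [abs_le]
  constructor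
  · have h : ∀ i ∈ F, α i - |α i - β i| ≤ Real.sqrt (α i) * Real.sqrt (β i) := by
      intro i hi
      rcases le_total (α i) (β i) with h | h
      · have h1 : Real.sqrt (α i) * Real.sqrt (α i) ≤ Real.sqrt (α i) * Real.sqrt (β i) :=
          mul_le_mul_of_nonneg_left (Real.sqrt_le_sqrt h) (Real.sqrt_nonneg _)
        rw [Real.mul_self_sqrt (hα0 i hi)] at h1
        have := abs_nonneg (α i - β i)
        linarith
      · have h1 : Real.sqrt (β i) * Real.sqrt (β i) ≤ Real.sqrt (α i) * Real.sqrt (β i) :=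
          mul_le_mul_of_nonneg_right (Real.sqrt_le_sqrt h) (Real.sqrt_nonneg _)
        rw [Real.mul_self_sqrt (hβ0 i hi)] at h1
        have h2 : |α i - β i| = α i - β i := abs_of_nonneg (by linarith)
        linarith
    have := Finset.sum_le_sum h
    rw [Finset.sum_sub_distrib, hα1] at this
    linarith
  · have h : ∀ i ∈ F, Real.sqrt (α i) * Real.sqrt (β i) ≤ (α i + β i) / 2 := by
      intro i hi
      nlinarith [Real.sq_sqrt (hα0 i hi), Real.sq_sqrt (hβ0 i hi),
        sq_nonneg (Real.sqrt (α i) - Real.sqrt (β i))]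
    have h1 := Finset.sum_le_sum h
    have h2 : ∑ i ∈ F, (α i + β i) / 2 = 1 := by
      rw [← Finset.sum_div, Finset.sum_add_distrib, hα1, hβ1]
      norm_num
    have h3 : (0:ℝ) ≤ ∑ i ∈ F, |α i - β i| :=
      Finset.sum_nonneg fun i _ => abs_nonneg _
    linarith

end


section Helpers

local notation "⟪" x ", " y "⟫" => @inner ℂ _ _ x y

lemma single_app {I : Type*} [DecidableEq I] (i j : I) (c : ℂ) :
    (lp.single 2 i c : lp (fun _ : I => ℂ) 2) j = if j = i then c else 0 := by
  rw [lp.single_apply]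
  split_ifs with h
  · subst h; simp
  · simp [h]

lemma inner_single_one {I : Type*} [DecidableEq I] (i : I) (x : lp (fun _ : I => ℂ) 2) :
    ⟪(lp.single 2 i (1:ℂ) : lp (fun _ : I => ℂ) 2), x⟫ = x i := by
  rw [lp.inner_single_left]
  simp [RCLike.inner_apply]

lemma isCompactOperator_smulRight {H₁ H₂ : Type*} [NormedAddCommGroup H₁]
    [NormedAddCommGroup H₂] [NormedSpace ℂ H₁] [NormedSpace ℂ H₂]
    (φ : H₁ →L[ℂ] ℂ) (v : H₂) : IsCompactOperator ⇑(φ.smulRight v) := by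
  refine ⟨(fun c : ℂ => c • v) '' Metric.closedBall 0 (‖φ‖ + 1), ?_, ?_⟩
  · exact (isCompact_closedBall _ _).image (continuous_id.smul continuous_const)
  · refine Filter.mem_of_superset (Metric.ball_mem_nhds 0 one_pos) ?_
    intro x hx
    rw [Metric.mem_ball, dist_zero_right] at hx
    refine ⟨φ x, ?_, by rw [ContinuousLinearMap.smulRight_apply]⟩
    rw [Metric.mem_closedBall, dist_zero_right]
    calc ‖φ x‖ ≤ ‖φ‖ * ‖x‖ := φ.le_opNorm x
      _ ≤ ‖φ‖ * 1 := by gcongr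
      _ ≤ ‖φ‖ + 1 := by rw [mul_one]; linarith [norm_nonneg φ]

lemma isCompactOperator_finset_sum {ι H₁ H₂ : Type*} [NormedAddCommGroup H₁]
    [NormedAddCommGroup H₂] [NormedSpace ℂ H₁] [NormedSpace ℂ H₂]
    (F : Finset ι) (f : ι → (H₁ →L[ℂ] H₂)) (h : ∀ i, IsCompactOperator ⇑(f i)) :
    IsCompactOperator ⇑(∑ i ∈ F, f i) := by
  classical
  induction F using Finset.induction with
  | empty =>
      simpa using (isCompactOperator_zero :
        IsCompactOperator (0 : H₁ → H₂))
  | insert a F' hni ih =>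
      rw [Finset.sum_insert hni]
      have : ⇑(f a + ∑ i ∈ F', f i) = ⇑(f a) + ⇑(∑ i ∈ F', f i) := rfl
      rw [this]
      exact (h a).add ih

end Helpers

namespace Stmt15Aux

variable {Γ Δ : Type*} [Group Γ] [Group Δ]

lemma bshift_coe (s : Γ) (y : DeltaGamma Γ Δ) (t : Γ) :
    ((bshift s y : DeltaGamma Γ Δ) : Γ → Δ) t = (y : Γ → Δ) (s⁻¹ * t) := rfl

lemma bshift_bshift (s s' : Γ) (y : DeltaGamma Γ Δ) :
    bshift s (bshift s' y) = bshift (s * s') y := by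
  apply Subtype.ext; funext t
  simp [bshift_coe, mul_assoc]

lemma bshift_one_smul (y : DeltaGamma Γ Δ) : bshift (1 : Γ) y = y := by
  apply Subtype.ext; funext t
  simp [bshift_coe]

/-- The Bernoulli shift as an equivalence. -/
def bshiftEquiv (s : Γ) : DeltaGamma Γ Δ ≃ DeltaGamma Γ Δ where
  toFun := bshift s
  invFun := bshift s⁻¹
  left_inv y := by rw [bshift_bshift]; simp [bshift_one_smul]
  right_inv y := by rw [bshift_bshift]; simp [bshift_one_smul]

lemma bshift_eq_one_iff (s : Γ) (y : DeltaGamma Γ Δ) : bshift s y = 1 ↔ y = 1 := by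
  constructor
  · intro h
    have := congrArg (bshift s⁻¹) h
    rw [bshift_bshift, inv_mul_cancel, bshift_one_smul] at this
    rw [this]
    apply Subtype.ext; funext t
    simp [bshift_coe]
  · rintro rfl
    apply Subtype.ext; funext t
    simp [bshift_coe]

/-- The support of `y` as a finset. -/
noncomputable def suppF (y : DeltaGamma Γ Δ) : Finset Γ :=
  Set.Finite.toFinset (y.2 : (mulSupport (y : Γ → Δ)).Finite)

lemma mem_suppF {y : DeltaGamma Γ Δ} {t : Γ} : t ∈ suppF y ↔ (y : Γ → Δ) t ≠ 1 := by
  exact (Set.Finite.mem_toFinset (hs := (y.2 : (mulSupport (y : Γ → Δ)).Finite))).trans mem_mulSupport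

lemma ne_one_iff {y : DeltaGamma Γ Δ} : y ≠ 1 ↔ ∃ t, (y : Γ → Δ) t ≠ 1 := by
  rw [← not_forall]
  constructor
  · intro h h'
    exact h (by apply Subtype.ext; funext t; simpa using h' t)
  · intro h h'
    exact h (fun t => by rw [h']; rfl)

lemma suppF_nonempty {y : DeltaGamma Γ Δ} (hy : y ≠ 1) : (suppF y).Nonempty := by
  obtain ⟨t, ht⟩ := ne_one_iff.mp hy
  exact ⟨t, mem_suppF.mpr ht⟩

variable [DecidableEq Γ]

/-- Finset outside of which `xiC` vanishes. -/
noncomputable def Fy (y : DeltaGamma Γ Δ) : Finset Γ := insert 1 (suppF y)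

variable (lG : Γ → ℝ) (lD : Δ → ℝ)

lemma wt_eq_zero {y : Γ → Δ} {t : Γ} (h : y t = 1) : wt lG lD y t = 0 := by
  simp [wt, h]

lemma wt_eq {y : Γ → Δ} {t : Γ} (h : y t ≠ 1) : wt lG lD y t = lG t + lD (y t) := by
  simp [wt, h]

lemma xiC_of_ne {y : DeltaGamma Γ Δ} (hy : y ≠ 1) (t : Γ) :
    xiC lG lD y t = (Real.sqrt (wt lG lD (y : Γ → Δ) t / w lG lD (y : Γ → Δ)) : ℂ) := by
  simp [xiC, hy]

lemma xiC_eq_zero {y : DeltaGamma Γ Δ} {t : Γ} (ht : t ∉ Fy y) : xiC lG lD y t = 0 := by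
  have ht1 : t ≠ 1 := by rintro rfl; exact ht (Finset.mem_insert_self _ _)
  have hts : (y : Γ → Δ) t = 1 := by
    by_contra h
    exact ht (Finset.mem_insert_of_mem (mem_suppF.mpr h))
  by_cases hy : y = 1
  · simp [xiC, hy, ht1]
  · rw [xiC_of_ne lG lD hy, wt_eq_zero lG lD hts]
    simp

lemma conj_xiC (y : DeltaGamma Γ Δ) (t : Γ) :
    (starRingEnd ℂ) (xiC lG lD y t) = xiC lG lD y t := by
  unfold xiC
  split_ifs <;> simp

lemma w_eq_sum (y : DeltaGamma Γ Δ) :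
    w lG lD (y : Γ → Δ) = ∑ t ∈ suppF y, wt lG lD (y : Γ → Δ) t := by
  apply finsum_eq_sum_of_support_subset
  intro t ht
  simp only [mem_support] at ht
  by_contra h
  exact ht (wt_eq_zero lG lD (by simpa using (mem_suppF (y := y)).not.mp (by simpa using h)))


lemma suppF_bshift (s : Γ) (y : DeltaGamma Γ Δ) :
    suppF (bshift s y) = (suppF y).image (fun t => s * t) := by
  ext u
  simp only [mem_suppF, Finset.mem_image, bshift_coe]
  constructor
  · intro h
    exact ⟨s⁻¹ * u, by simpa using h, by simp⟩
  · rintro ⟨t, ht, rfl⟩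
    simpa using ht

lemma w_bshift_eq_sum (s : Γ) (y : DeltaGamma Γ Δ) :
    w lG lD ((bshift s y : DeltaGamma Γ Δ) : Γ → Δ) =
      ∑ t ∈ suppF y, wt lG lD ((bshift s y : DeltaGamma Γ Δ) : Γ → Δ) (s * t) := by
  rw [w_eq_sum, suppF_bshift]
  exact Finset.sum_image (fun a _ b _ h => mul_left_cancel h)

lemma wt_bshift (s : Γ) (y : DeltaGamma Γ Δ) (t : Γ) (ht : (y : Γ → Δ) t ≠ 1) :
    wt lG lD ((bshift s y : DeltaGamma Γ Δ) : Γ → Δ) (s * t)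
      = lG (s * t) + lD ((y : Γ → Δ) t) := by
  have h : ((bshift s y : DeltaGamma Γ Δ) : Γ → Δ) (s * t) = (y : Γ → Δ) t := by
    rw [bshift_coe]; simp
  rw [wt, if_pos (by rw [h]; exact ht), h]

lemma wt_pos (hG : IsProperLength lG) (hD : IsProperLength lD) {y : Γ → Δ} {t : Γ}
    (h : y t ≠ 1) : 0 < wt lG lD y t := by
  rw [wt_eq lG lD h]
  have h1 := hG.nonneg t
  have h2 := hD.nonneg (y t)
  have h3 : lD (y t) ≠ 0 := fun hc => h ((hD.eq_zero_iff (y t)).mp hc)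
  have : 0 < lD (y t) := lt_of_le_of_ne h2 (Ne.symm h3)
  linarith

lemma w_pos (hG : IsProperLength lG) (hD : IsProperLength lD) {y : DeltaGamma Γ Δ}
    (hy : y ≠ 1) : 0 < w lG lD (y : Γ → Δ) := by
  rw [w_eq_sum]
  exact Finset.sum_pos (fun t ht => wt_pos lG lD hG hD (mem_suppF.mp ht)) (suppF_nonempty hy)

lemma key_bound (hG : IsProperLength lG) (hD : IsProperLength lD) (s : Γ)
    {y : DeltaGamma Γ Δ} (hy : y ≠ 1) :
    ‖(∑ t ∈ Fy y, xiC lG lD y t * xiC lG lD (bshift s y) (s * t)) - 1‖ ≤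
      2 * lG s * (suppF y).card / w lG lD (y : Γ → Δ) := by
  classical
  have hsy : bshift s y ≠ 1 := fun h => hy ((bshift_eq_one_iff s y).mp h)
  set F := suppF y with hF
  set A := w lG lD (y : Γ → Δ) with hAdef
  set B := w lG lD ((bshift s y : DeltaGamma Γ Δ) : Γ → Δ) with hBdef
  set a : Γ → ℝ := fun t => wt lG lD (y : Γ → Δ) t with ha
  set b : Γ → ℝ := fun t => wt lG lD ((bshift s y : DeltaGamma Γ Δ) : Γ → Δ) (s * t) with hb
  have hA : A = ∑ t ∈ F, a t := w_eq_sum lG lD y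
  have hB : B = ∑ t ∈ F, b t := w_bshift_eq_sum lG lD s y
  have hApos : 0 < A := w_pos lG lD hG hD hy
  have hBpos : 0 < B := w_pos lG lD hG hD hsy
  -- reduce the sum over `Fy y` to a real sum over `F`
  have hstep : (∑ t ∈ Fy y, xiC lG lD y t * xiC lG lD (bshift s y) (s * t)) =
      ((∑ t ∈ F, Real.sqrt (a t / A) * Real.sqrt (b t / B) : ℝ) : ℂ) := by
    have hterm : ∀ t ∈ F, xiC lG lD y t * xiC lG lD (bshift s y) (s * t) =
        ((Real.sqrt (a t / A) * Real.sqrt (b t / B) : ℝ) : ℂ) := by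
      intro t _
      rw [xiC_of_ne lG lD hy, xiC_of_ne lG lD hsy]
      push_cast
      rfl
    have hFy : Fy y = insert 1 F := rfl
    by_cases h1 : (1 : Γ) ∈ F
    · rw [hFy, Finset.insert_eq_self.mpr h1, Finset.sum_congr rfl hterm]
      push_cast
      rfl
    · have hy1 : (y : Γ → Δ) 1 = 1 := by
        by_contra h
        exact h1 (mem_suppF.mpr h)
      have hxi1 : xiC lG lD y 1 = 0 := by
        rw [xiC_of_ne lG lD hy, wt_eq_zero lG lD hy1]
        simp
      rw [hFy, Finset.sum_insert h1, hxi1, zero_mul, zero_add,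
        Finset.sum_congr rfl hterm]
      push_cast
      rfl
  rw [hstep]
  have hnorm : ‖((∑ t ∈ F, Real.sqrt (a t / A) * Real.sqrt (b t / B) : ℝ) : ℂ) - 1‖
      = |(∑ t ∈ F, Real.sqrt (a t / A) * Real.sqrt (b t / B)) - 1| := by
    rw [show ((∑ t ∈ F, Real.sqrt (a t / A) * Real.sqrt (b t / B) : ℝ) : ℂ) - 1 =
      (((∑ t ∈ F, Real.sqrt (a t / A) * Real.sqrt (b t / B)) - 1 : ℝ) : ℂ) by push_cast; ring]
    rw [Complex.norm_real, Real.norm_eq_abs]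
  rw [hnorm]
  -- facts about a and b
  have hapos : ∀ t ∈ F, 0 < a t := fun t ht => wt_pos lG lD hG hD (mem_suppF.mp ht)
  have hbpos : ∀ t ∈ F, 0 < b t := by
    intro t ht
    apply wt_pos lG lD hG hD
    have : ((bshift s y : DeltaGamma Γ Δ) : Γ → Δ) (s * t) = (y : Γ → Δ) t := by
      rw [bshift_coe]; simp
    rw [this]
    exact mem_suppF.mp ht
  have hab : ∀ t ∈ F, |a t - b t| ≤ lG s := by
    intro t ht
    have hyt := mem_suppF.mp ht
    have hav : a t = lG t + lD ((y : Γ → Δ) t) := wt_eq lG lD hyt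
    have hbv : b t = lG (s * t) + lD ((y : Γ → Δ) t) := wt_bshift lG lD s y t hyt
    have h1 : lG (s * t) ≤ lG s + lG t := hG.mul_le s t
    have h2 : lG t ≤ lG s + lG (s * t) := by
      have := hG.mul_le s⁻¹ (s * t)
      rw [hG.inv_eq] at this
      simpa using this
    rw [abs_le, hav, hbv]
    constructor <;> linarith
  have hBA : |B - A| ≤ (F.card : ℝ) * lG s := by
    rw [hB, hA, ← Finset.sum_sub_distrib]
    calc |∑ t ∈ F, (b t - a t)| ≤ ∑ t ∈ F, |b t - a t| := Finset.abs_sum_le_sum_abs _ _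
      _ ≤ ∑ _t ∈ F, lG s := Finset.sum_le_sum (fun t ht => by rw [abs_sub_comm]; exact hab t ht)
      _ = (F.card : ℝ) * lG s := by rw [Finset.sum_const, nsmul_eq_mul]
  -- apply the elementary estimate
  have hmain := abs_sum_sqrt_sub_one_le F (fun t => a t / A) (fun t => b t / B)
    (fun t ht => div_nonneg (hapos t ht).le hApos.le)
    (fun t ht => div_nonneg (hbpos t ht).le hBpos.le)
    (by rw [← Finset.sum_div, ← hA, div_self hApos.ne'])
    (by rw [← Finset.sum_div, ← hB, div_self hBpos.ne'])
  refine hmain.trans ?_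
  -- bound the total variation distance
  have hpt : ∀ t ∈ F, |a t / A - b t / B| ≤ |a t - b t| / A + b t / B * (|B - A| / A) := by
    intro t ht
    have key : a t / A - b t / B = (a t - b t) / A + b t / B * ((B - A) / A) := by
      field_simp
      ring
    rw [key]
    calc |(a t - b t) / A + b t / B * ((B - A) / A)|
        ≤ |(a t - b t) / A| + |b t / B * ((B - A) / A)| := abs_add_le _ _
      _ = |a t - b t| / A + b t / B * (|B - A| / A) := by
          simp only [abs_div, abs_mul]
          rw [abs_of_pos hApos, abs_of_pos hBpos, abs_of_pos (hbpos t ht)]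
  calc ∑ t ∈ F, |a t / A - b t / B|
      ≤ ∑ t ∈ F, (|a t - b t| / A + b t / B * (|B - A| / A)) := Finset.sum_le_sum hpt
    _ = (∑ t ∈ F, |a t - b t|) / A + (∑ t ∈ F, b t / B) * (|B - A| / A) := by
        rw [Finset.sum_add_distrib, Finset.sum_div, Finset.sum_mul]
    _ ≤ ((F.card : ℝ) * lG s) / A + 1 * ((F.card : ℝ) * lG s / A) := by
        have h1 : (∑ t ∈ F, |a t - b t|) ≤ (F.card : ℝ) * lG s := by
          calc (∑ t ∈ F, |a t - b t|) ≤ ∑ _t ∈ F, lG s := Finset.sum_le_sum hab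
            _ = (F.card : ℝ) * lG s := by rw [Finset.sum_const, nsmul_eq_mul]
        have h2 : (∑ t ∈ F, b t / B) = 1 := by rw [← Finset.sum_div, ← hB, div_self hBpos.ne']
        rw [h2, one_mul]
        have g1 : (∑ t ∈ F, |a t - b t|) / A ≤ ((F.card : ℝ) * lG s) / A := by gcongr
        have g2 : |B - A| / A ≤ ((F.card : ℝ) * lG s) / A := by gcongr
        linarith
    _ = 2 * lG s * (F.card : ℝ) / A := by ring

lemma finite_small (hG : IsProperLength lG) (hD : IsProperLength lD) {C : ℝ} (hC : 0 < C) :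
    {y : DeltaGamma Γ Δ | y ≠ 1 ∧ w lG lD (y : Γ → Δ) ≤ C * (suppF y).card}.Finite := by
  classical
  set S2C : Finset Γ := (hG.proper (2 * C)).toFinset with hS2C
  set m : ℕ := S2C.card with hm
  set R : ℝ := 2 * C * m with hR
  -- every element of the set has all "weights" bounded by R
  have hkey : ∀ y ∈ {y : DeltaGamma Γ Δ | y ≠ 1 ∧ w lG lD (y : Γ → Δ) ≤ C * (suppF y).card},
      ∀ t : Γ, (y : Γ → Δ) t = 1 ∨ (lG t ≤ R ∧ lD ((y : Γ → Δ) t) ≤ R) := by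
    rintro y ⟨hy1, hyC⟩ t
    by_cases hyt : (y : Γ → Δ) t = 1
    · exact Or.inl hyt
    right
    set n : ℕ := (suppF y).card with hn
    have hwR : w lG lD (y : Γ → Δ) ≤ R := by
      have hsub : (suppF y \ S2C) ⊆ suppF y := Finset.sdiff_subset
      have hge : ∀ u ∈ suppF y \ S2C, 2 * C ≤ wt lG lD (y : Γ → Δ) u := by
        intro u hu
        have hu1 : u ∈ suppF y := hsub hu
        have hu2 : u ∉ S2C := (Finset.mem_sdiff.mp hu).2
        have hlG : 2 * C < lG u := by
          by_contra h
          push_neg at h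
          exact hu2 (by rw [hS2C]; exact (hG.proper (2*C)).mem_toFinset.mpr h)
        rw [wt_eq lG lD (mem_suppF.mp hu1)]
        have := hD.nonneg ((y : Γ → Δ) u)
        linarith
      have hsum1 : ∑ u ∈ suppF y \ S2C, wt lG lD (y : Γ → Δ) u ≤ w lG lD (y : Γ → Δ) := by
        rw [w_eq_sum]
        apply Finset.sum_le_sum_of_subset_of_nonneg hsub
        intro u hu _
        by_cases h : (y : Γ → Δ) u = 1
        · exact (wt_eq_zero lG lD h).ge
        · exact (wt_pos lG lD hG hD h).le
      have hsum2 : ((suppF y \ S2C).card : ℝ) * (2 * C) ≤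
          ∑ u ∈ suppF y \ S2C, wt lG lD (y : Γ → Δ) u := by
        calc ((suppF y \ S2C).card : ℝ) * (2 * C) = ∑ _u ∈ suppF y \ S2C, 2 * C := by
              rw [Finset.sum_const, nsmul_eq_mul]
          _ ≤ _ := Finset.sum_le_sum hge
      have hcard : n ≤ (suppF y \ S2C).card + m := Finset.card_le_card_sdiff_add_card
      have hcardR : (n : ℝ) ≤ ((suppF y \ S2C).card : ℝ) + m := by exact_mod_cast hcard
      -- deduce card (sdiff) ≤ m, hence n ≤ 2 m
      have hsd : ((suppF y \ S2C).card : ℝ) ≤ (m : ℝ) := by nlinarith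
      have hn2m : (n : ℝ) ≤ 2 * m := by linarith
      calc w lG lD (y : Γ → Δ) ≤ C * n := hyC
        _ ≤ C * (2 * m) := by nlinarith
        _ = R := by rw [hR]; ring
    have htm : t ∈ suppF y := mem_suppF.mpr hyt
    have hwt : wt lG lD (y : Γ → Δ) t ≤ w lG lD (y : Γ → Δ) := by
      rw [w_eq_sum]
      apply Finset.single_le_sum (f := fun u => wt lG lD (y : Γ → Δ) u) _ htm
      intro u hu
      by_cases h : (y : Γ → Δ) u = 1
      · exact (wt_eq_zero lG lD h).ge
      · exact (wt_pos lG lD hG hD h).le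
    rw [wt_eq lG lD hyt] at hwt
    have h1 := hG.nonneg t
    have h2 := hD.nonneg ((y : Γ → Δ) t)
    constructor <;> linarith
  -- the set of such y is finite
  have hSR : ({t : Γ | lG t ≤ R}).Finite := hG.proper R
  have : Finite ↥({t : Γ | lG t ≤ R}) := hSR.to_subtype
  have hDR : ({d : Δ | d = 1 ∨ lD d ≤ R}).Finite := by
    have : {d : Δ | d = 1 ∨ lD d ≤ R} ⊆ insert 1 {d : Δ | lD d ≤ R} := by
      intro d hd
      rcases hd with h | h
      · exact Set.mem_insert_iff.mpr (Or.inl h)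
      · exact Set.mem_insert_iff.mpr (Or.inr h)
    exact ((hD.proper R).insert 1).subset this
  set Φ : DeltaGamma Γ Δ → (↥({t : Γ | lG t ≤ R}) → Δ) :=
    fun y u => (y : Γ → Δ) (u : Γ) with hΦ
  apply Set.Finite.of_finite_image (f := Φ)
  · apply Set.Finite.subset (Set.Finite.pi' (fun _ => hDR))
    rintro g ⟨y, hy, rfl⟩
    intro u
    rcases hkey y hy (u : Γ) with h | h
    · exact Or.inl h
    · exact Or.inr h.2
  · intro y hy y' hy' hΦeq
    apply Subtype.ext; funext t
    by_cases h : lG t ≤ R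
    · exact congrFun hΦeq ⟨t, h⟩
    · have h1 : (y : Γ → Δ) t = 1 := by
        rcases hkey y hy t with h' | h'
        · exact h'
        · exact absurd h'.1 h
      have h2 : (y' : Γ → Δ) t = 1 := by
        rcases hkey y' hy' t with h' | h'
        · exact h'
        · exact absurd h'.1 h
      rw [h1, h2]

lemma finite_ge (hG : IsProperLength lG) (hD : IsProperLength lD) (s : Γ) {ε : ℝ} (hε : 0 < ε) :
    {y : DeltaGamma Γ Δ |
      ε ≤ ‖(∑ t ∈ Fy y, xiC lG lD y t * xiC lG lD (bshift s y) (s * t)) - 1‖}.Finite := by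
  have hL : 0 ≤ lG s := hG.nonneg s
  have hC : (0:ℝ) < 2 * lG s / ε + 1 := by positivity
  apply Set.Finite.subset (((finite_small lG lD hG hD hC).insert 1))
  intro y hy
  by_cases hy1 : y = 1
  · exact Set.mem_insert_iff.mpr (Or.inl hy1)
  refine Set.mem_insert_iff.mpr (Or.inr ⟨hy1, ?_⟩)
  have hb := key_bound lG lD hG hD s hy1
  have hεb : ε ≤ 2 * lG s * (suppF y).card / w lG lD (y : Γ → Δ) := le_trans hy hb
  have hApos : 0 < w lG lD (y : Γ → Δ) := w_pos lG lD hG hD hy1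
  rw [le_div_iff₀ hApos] at hεb
  have hn : (0:ℝ) ≤ ((suppF y).card : ℝ) := Nat.cast_nonneg _
  rw [div_add' _ _ _ hε.ne', div_mul_eq_mul_div, le_div_iff₀ hε]
  nlinarith

end Stmt15Aux


set_option maxHeartbeats 1600000
set_option synthInstance.maxHeartbeats 400000
open Stmt15Aux

/-- Let `V : ℓ²(Δ_Γ) → ℓ²(Δ_Γ × Γ)` be the isometry `Vδ_y = δ_y ⊗ ξ_y`,
let `W(s)` be the unitary of `ℓ²(Δ_Γ × Γ)` permuting the basis by
`δ_{(y,t)} ↦ δ_{(s·y, st)}`, and let `σ(s)δ_y = δ_{s·y}` on `ℓ²(Δ_Γ)` (with `s·y` the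
Bernoulli shift). Then `V* W(s) V − σ(s)` is a compact operator for every `s ∈ Γ`. -/
theorem stmt15 {Γ Δ : Type*} [Group Γ] [Group Δ] [Countable Γ] [Countable Δ]
    [DecidableEq Γ] [DecidableEq (Γ → Δ)]
    (lG : Γ → ℝ) (lD : Δ → ℝ) (hG : IsProperLength lG) (hD : IsProperLength lD)
    (V : lp (fun _ : DeltaGamma Γ Δ => ℂ) 2 →ₗᵢ[ℂ] lp (fun _ : DeltaGamma Γ Δ × Γ => ℂ) 2)
    (hV : ∀ (y z : DeltaGamma Γ Δ) (t : Γ),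
      (V (lp.single 2 y 1)) (z, t) = if z = y then xiC lG lD y t else 0)
    (W : Γ → (lp (fun _ : DeltaGamma Γ Δ × Γ => ℂ) 2 →L[ℂ]
              lp (fun _ : DeltaGamma Γ Δ × Γ => ℂ) 2))
    (hW : ∀ (s : Γ) (y : DeltaGamma Γ Δ) (t : Γ),
      W s (lp.single 2 (y, t) 1) = lp.single 2 (bshift s y, s * t) 1)
    (σ : Γ → (lp (fun _ : DeltaGamma Γ Δ => ℂ) 2 →L[ℂ]
              lp (fun _ : DeltaGamma Γ Δ => ℂ) 2))
    (hσ : ∀ (s : Γ) (y : DeltaGamma Γ Δ),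
      σ s (lp.single 2 y 1) = lp.single 2 (bshift s y) 1)
    (s : Γ) :
    IsCompactOperator
      ((ContinuousLinearMap.adjoint V.toContinuousLinearMap).comp
        ((W s).comp V.toContinuousLinearMap) - σ s) := by
  classical
  set T : lp (fun _ : DeltaGamma Γ Δ => ℂ) 2 →L[ℂ] lp (fun _ : DeltaGamma Γ Δ => ℂ) 2 :=
    (ContinuousLinearMap.adjoint V.toContinuousLinearMap).comp
      ((W s).comp V.toContinuousLinearMap) - σ s with hT
  set d : DeltaGamma Γ Δ → ℂ := fun y =>
    (∑ t ∈ Fy y, xiC lG lD y t * xiC lG lD (bshift s y) (s * t)) - 1 with hd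
  set g : DeltaGamma Γ Δ ≃ DeltaGamma Γ Δ := bshiftEquiv s with hg
  have hgapp : ∀ y, g y = bshift s y := fun _ => rfl
  have hgsymm : ∀ z, g (g.symm z) = z := fun z => g.apply_symm_apply z
  have hV' : ∀ (y z : DeltaGamma Γ Δ) (t : Γ),
      (V.toContinuousLinearMap (lp.single 2 y 1)) (z, t)
        = if z = y then xiC lG lD y t else 0 := by
    intro y z t
    rw [V.coe_toContinuousLinearMap]
    exact hV y z t
  -- Step 1: V on basis vectors, as a finite sum
  have hVy : ∀ y : DeltaGamma Γ Δ, V.toContinuousLinearMap (lp.single 2 y 1) =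
      ∑ t ∈ Fy y, xiC lG lD y t • lp.single 2 ((y, t) : DeltaGamma Γ Δ × Γ) 1 := by
    intro y
    apply lp.ext
    funext p
    obtain ⟨z, t⟩ := p
    rw [hV' y z t, lp.coeFn_sum, Finset.sum_apply]
    have hterm : ∀ t' ∈ Fy y,
        (xiC lG lD y t' • lp.single 2 ((y, t') : DeltaGamma Γ Δ × Γ) 1 :
            lp (fun _ : DeltaGamma Γ Δ × Γ => ℂ) 2) (z, t)
          = if (z, t) = (y, t') then xiC lG lD y t' else 0 := by
      intro t' _
      rw [lp.coeFn_smul, Pi.smul_apply, single_app, smul_eq_mul, mul_ite, mul_one, mul_zero]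
    rw [Finset.sum_congr rfl hterm]
    by_cases hz : z = y
    · have : ∀ t' ∈ Fy y, (if ((z, t) : DeltaGamma Γ Δ × Γ) = (y, t') then xiC lG lD y t' else 0)
          = if t = t' then xiC lG lD y t' else 0 := by
        intro t' _
        simp [Prod.ext_iff, hz]
      rw [Finset.sum_congr rfl this, Finset.sum_ite_eq, if_pos hz]
      split_ifs with h
      · rfl
      · exact xiC_eq_zero lG lD h
    · rw [if_neg hz]
      symm
      apply Finset.sum_eq_zero
      intro t' _
      rw [if_neg]
      intro h
      exact hz (congrArg Prod.fst h)
  -- Step 2: T on basis vectors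
  have hadj : ∀ (u : lp (fun _ : DeltaGamma Γ Δ × Γ => ℂ) 2) (z : DeltaGamma Γ Δ),
      ((ContinuousLinearMap.adjoint V.toContinuousLinearMap) u) z
        = @inner ℂ _ _ (V.toContinuousLinearMap (lp.single 2 z 1)) u := by
    intro u z
    rw [← inner_single_one z ((ContinuousLinearMap.adjoint V.toContinuousLinearMap) u),
      ContinuousLinearMap.adjoint_inner_right]
  have hTy : ∀ y : DeltaGamma Γ Δ, T (lp.single 2 y 1) = d y • lp.single 2 (g y) 1 := by
    intro y
    have hWVy : (W s) (V.toContinuousLinearMap (lp.single 2 y 1)) =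
        ∑ t ∈ Fy y, xiC lG lD y t • lp.single 2 ((bshift s y, s * t) : DeltaGamma Γ Δ × Γ) 1 := by
      rw [hVy y, map_sum]
      exact Finset.sum_congr rfl fun t _ => by rw [map_smul, hW]
    apply lp.ext
    funext z
    have hL : (T (lp.single 2 y 1) : lp (fun _ : DeltaGamma Γ Δ => ℂ) 2) z =
        (∑ t ∈ Fy y, xiC lG lD y t *
          (starRingEnd ℂ) ((V.toContinuousLinearMap (lp.single 2 z 1)) (bshift s y, s * t)))
        - (lp.single 2 (bshift s y) 1 : lp (fun _ : DeltaGamma Γ Δ => ℂ) 2) z := by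
      rw [hT, ContinuousLinearMap.sub_apply, lp.coeFn_sub, Pi.sub_apply,
        ContinuousLinearMap.comp_apply, ContinuousLinearMap.comp_apply, hσ]
      congr 1
      rw [hadj, hWVy, inner_sum]
      refine Finset.sum_congr rfl fun t _ => ?_
      rw [inner_smul_right, lp.inner_single_right]
      simp [RCLike.inner_apply]
    have hR : (d y • lp.single 2 (g y) 1 : lp (fun _ : DeltaGamma Γ Δ => ℂ) 2) z
        = d y * (if z = bshift s y then 1 else 0) := by
      rw [lp.coeFn_smul, Pi.smul_apply, hgapp, single_app, smul_eq_mul]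
    rw [hL, hR, single_app]
    by_cases hz : z = bshift s y
    · rw [if_pos hz, mul_one]
      have hterm : ∀ t ∈ Fy y, xiC lG lD y t *
          (starRingEnd ℂ) ((V.toContinuousLinearMap (lp.single 2 z 1)) (bshift s y, s * t))
          = xiC lG lD y t * xiC lG lD (bshift s y) (s * t) := by
        intro t _
        rw [hV' z (bshift s y) (s * t), if_pos hz.symm, hz, conj_xiC]
      rw [Finset.sum_congr rfl hterm, hd]
    · rw [if_neg hz, mul_zero]
      have hterm0 : ∀ t ∈ Fy y, xiC lG lD y t *
          (starRingEnd ℂ) ((V.toContinuousLinearMap (lp.single 2 z 1)) (bshift s y, s * t))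
          = 0 := by
        intro t _
        rw [hV' z (bshift s y) (s * t), if_neg (fun h => hz h.symm)]
        simp
      rw [Finset.sum_congr rfl hterm0, Finset.sum_const_zero]
      simp
  -- Step 3: T on general vectors, pointwise
  have hTf : ∀ (f : lp (fun _ : DeltaGamma Γ Δ => ℂ) 2) (z : DeltaGamma Γ Δ),
      (T f) z = d (g.symm z) * f (g.symm z) := by
    intro f z
    have hs1 : HasSum (fun y : DeltaGamma Γ Δ => lp.single 2 y (f y)) f :=
      lp.hasSum_single ENNReal.ofNat_ne_top f
    have hs2 : HasSum (fun y => T (lp.single 2 y (f y))) (T f) := T.hasSum hs1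
    have hs3 := (innerSL ℂ (lp.single 2 z 1)).hasSum hs2
    simp only [innerSL_apply_apply] at hs3
    rw [inner_single_one z (T f)] at hs3
    have heq : (fun y => @inner ℂ _ _
          (lp.single 2 z (1:ℂ) : lp (fun _ : DeltaGamma Γ Δ => ℂ) 2)
          (T (lp.single 2 y (f y))))
        = fun y => if y = g.symm z then d (g.symm z) * f (g.symm z) else 0 := by
      funext y
      have h1 : (lp.single 2 y (f y) : lp (fun _ : DeltaGamma Γ Δ => ℂ) 2)
          = f y • lp.single 2 y 1 := by
        rw [← lp.single_smul, smul_eq_mul, mul_one]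
      rw [h1, map_smul, hTy, inner_smul_right, inner_smul_right,
        inner_single_one z (lp.single 2 (g y) 1), single_app]
      by_cases hy : y = g.symm z
      · rw [if_pos (by rw [hy, hgsymm]), if_pos hy, hy]
        ring
      · rw [if_neg (fun h => hy (by rw [h, Equiv.symm_apply_apply])), if_neg hy]
        simp
    rw [heq] at hs3
    exact hs3.unique (hasSum_ite_eq (g.symm z) _)
  -- Step 4: finite-rank approximations
  set SF : Finset (DeltaGamma Γ Δ) → (lp (fun _ : DeltaGamma Γ Δ => ℂ) 2 →L[ℂ]
      lp (fun _ : DeltaGamma Γ Δ => ℂ) 2) := fun F =>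
    ∑ y ∈ F, d y • ((innerSL ℂ (lp.single 2 y 1)).smulRight (lp.single 2 (g y) 1)) with hSF
  have hSFc : ∀ F, IsCompactOperator ⇑(SF F) := by
    intro F
    apply isCompactOperator_finset_sum
    intro y
    rw [ContinuousLinearMap.coe_smul']
    exact (isCompactOperator_smulRight _ _).smul (d y)
  have hSFf : ∀ (F : Finset (DeltaGamma Γ Δ)) (f : lp (fun _ : DeltaGamma Γ Δ => ℂ) 2)
      (z : DeltaGamma Γ Δ),
      (SF F f) z = if g.symm z ∈ F then d (g.symm z) * f (g.symm z) else 0 := by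
    intro F f z
    have h1 : (SF F f : lp (fun _ : DeltaGamma Γ Δ => ℂ) 2) z
        = ∑ y ∈ F, (if y = g.symm z then d y * f y else 0) := by
      rw [hSF]
      rw [ContinuousLinearMap.sum_apply, lp.coeFn_sum, Finset.sum_apply]
      refine Finset.sum_congr rfl fun y _ => ?_
      rw [ContinuousLinearMap.smul_apply, ContinuousLinearMap.smulRight_apply, innerSL_apply_apply,
        inner_single_one, lp.coeFn_smul, Pi.smul_apply, lp.coeFn_smul, Pi.smul_apply, single_app]
      by_cases hy : y = g.symm z
      · rw [if_pos (by rw [hy, hgsymm]), if_pos hy]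
        simp only [smul_eq_mul, mul_one]
      · rw [if_neg (fun h => hy (by rw [h, Equiv.symm_apply_apply])), if_neg hy]
        simp
    rw [h1, Finset.sum_ite_eq' F (g.symm z) (fun y => d y * f y)]
  -- Step 5: norm estimate
  have hnorm : ∀ (ε : ℝ), 0 ≤ ε → ∀ (F : Finset (DeltaGamma Γ Δ)),
      (∀ y ∉ F, ‖d y‖ ≤ ε) → ‖T - SF F‖ ≤ ε := by
    intro ε hε F hF
    apply ContinuousLinearMap.opNorm_le_bound _ hε
    intro f
    set h2 : lp (fun _ : DeltaGamma Γ Δ => ℂ) 2 := (T - SF F) f with hh2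
    have hdiff : ∀ z, h2 z
        = if g.symm z ∈ F then 0 else d (g.symm z) * f (g.symm z) := by
      intro z
      rw [hh2, ContinuousLinearMap.sub_apply, lp.coeFn_sub, Pi.sub_apply, hTf, hSFf]
      split_ifs with h
      · simp
      · simp
    have hb : ∀ z, ‖h2 z‖ ≤ ε * ‖f (g.symm z)‖ := by
      intro z
      rw [hdiff z]
      split_ifs with h
      · simp only [norm_zero]
        positivity
      · rw [norm_mul]
        exact mul_le_mul_of_nonneg_right (hF _ h) (norm_nonneg _)
    have e2 : ((2:ENNReal)).toReal = (2:ℝ) := by norm_num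
    have hp2 : (0:ℝ) < ((2:ENNReal)).toReal := by rw [e2]; norm_num
    have hfs : Summable (fun y : DeltaGamma Γ Δ => ‖f y‖ ^ ((2:ENNReal)).toReal) :=
      (lp.memℓp f).summable hp2
    have hgs : Summable (fun z : DeltaGamma Γ Δ => ‖f (g.symm z)‖ ^ ((2:ENNReal)).toReal) :=
      (g.symm.summable_iff (f := fun y : DeltaGamma Γ Δ => ‖f y‖ ^ ((2:ENNReal)).toReal)).mpr hfs
    have hRs : Summable (fun z : DeltaGamma Γ Δ =>
        (ε * ‖f (g.symm z)‖) ^ ((2:ENNReal)).toReal) := by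
      have : (fun z : DeltaGamma Γ Δ => (ε * ‖f (g.symm z)‖) ^ ((2:ENNReal)).toReal)
          = fun z => ε ^ ((2:ENNReal)).toReal * ‖f (g.symm z)‖ ^ ((2:ENNReal)).toReal := by
        funext z
        rw [Real.mul_rpow hε (norm_nonneg _)]
      rw [this]
      exact hgs.mul_left _
    have hmono : ∀ z, ‖h2 z‖ ^ ((2:ENNReal)).toReal ≤
        (ε * ‖f (g.symm z)‖) ^ ((2:ENNReal)).toReal := fun z =>
      Real.rpow_le_rpow (norm_nonneg _) (hb z) hp2.le
    have hsum : ‖h2‖ ^ ((2:ENNReal)).toReal ≤ (ε * ‖f‖) ^ ((2:ENNReal)).toReal := by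
      rw [lp.norm_rpow_eq_tsum hp2 h2]
      calc (∑' z, ‖h2 z‖ ^ ((2:ENNReal)).toReal)
          ≤ ∑' z, (ε * ‖f (g.symm z)‖) ^ ((2:ENNReal)).toReal :=
            Summable.tsum_le_tsum hmono ((lp.memℓp h2).summable hp2) hRs
        _ = ε ^ ((2:ENNReal)).toReal * ∑' z, ‖f (g.symm z)‖ ^ ((2:ENNReal)).toReal := by
            rw [← tsum_mul_left]
            congr 1
            funext z
            rw [Real.mul_rpow hε (norm_nonneg _)]
        _ = ε ^ ((2:ENNReal)).toReal * ∑' y, ‖f y‖ ^ ((2:ENNReal)).toReal := by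
            congr 1
            exact Equiv.tsum_eq g.symm (fun y => ‖f y‖ ^ ((2:ENNReal)).toReal)
        _ = ε ^ ((2:ENNReal)).toReal * ‖f‖ ^ ((2:ENNReal)).toReal := by
            rw [← lp.norm_rpow_eq_tsum hp2 f]
        _ = (ε * ‖f‖) ^ ((2:ENNReal)).toReal := by
            rw [Real.mul_rpow hε (norm_nonneg _)]
    exact (Real.rpow_le_rpow_iff (norm_nonneg _)
      (mul_nonneg hε (norm_nonneg _)) hp2).mp hsum
  -- Step 6: conclusion
  have hfin : ∀ ε : ℝ, 0 < ε → {y : DeltaGamma Γ Δ | ε ≤ ‖d y‖}.Finite := by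
    intro ε hε
    exact finite_ge lG lD hG hD s hε
  set Fn : ℕ → Finset (DeltaGamma Γ Δ) := fun n =>
    (hfin (1/(n+1)) (by positivity)).toFinset with hFn
  have hFnd : ∀ n, ∀ y ∉ Fn n, ‖d y‖ ≤ 1/((n:ℝ)+1) := by
    intro n y hy
    rw [hFn] at hy
    simp only [Set.Finite.mem_toFinset, Set.mem_setOf_eq] at hy
    push_neg at hy
    exact hy.le
  have hTSF : ∀ n : ℕ, ‖T - SF (Fn n)‖ ≤ 1/((n:ℝ)+1) := fun n =>
    hnorm _ (by positivity) (Fn n) (hFnd n)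
  have htends : Filter.Tendsto (fun n => SF (Fn n)) Filter.atTop (nhds T) := by
    rw [tendsto_iff_norm_sub_tendsto_zero]
    apply squeeze_zero (fun n => norm_nonneg _) (fun n => ?_)
      tendsto_one_div_add_atTop_nhds_zero_nat
    rw [norm_sub_rev]
    exact hTSF n
  exact isCompactOperator_of_tendsto htends
    (Filter.Eventually.of_forall fun n => hSFc (Fn n))
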